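/- In any (θ₁, θ₂, …, θ_{2m−1})-representation of nK₄ with θ₁ < θ₂ < ⋯ < θ_{2m−1}, at most one of the n copies of K₄ contains an edge of color m, i.e., at most one copy of K₄ contains an edge uv with r_u + r_v ≥ θ_{2m−1}. -/

import Mathlib

open Finset

/-- The disjoint union of `n` copies of the complete graph `K_m`,
on vertex set `Fin n × Fin m`. -/
def copiesK (n m : ℕ) : SimpleGraph (Fin n × Fin m) where
  Adj x y := x.1 = y.1 ∧ x ≠ y
  symm := ⟨fun x y h => ⟨h.1.symm, h.2.symm⟩⟩
  loopless := ⟨fun x h => h.2 rfl⟩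

/-- The complete `n`-partite graph with `m` vertices in each part,
on vertex set `Fin n × Fin m`. -/
def completeMulti (n m : ℕ) : SimpleGraph (Fin n × Fin m) where
  Adj x y := x.1 ≠ y.1
  symm := ⟨fun x y h => h.symm⟩
  loopless := ⟨fun x h => h rfl⟩

/-- `r` together with the strictly increasing thresholds `θ₁ < ⋯ < θ_k` is a
`(θ₁, …, θ_k)`-representation of `G`: for distinct `u v`, `uv` is an edge iff the
number of thresholds not exceeding `r u + r v` is odd. -/
def IsRep {V : Type*} {k : ℕ} (G : SimpleGraph V) (θ : Fin k → ℝ) (r : V → ℝ) : Prop :=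
  StrictMono θ ∧ ∀ u v : V, u ≠ v →
    (G.Adj u v ↔ Odd (Finset.univ.filter (fun i => θ i ≤ r u + r v)).card)

/-- `G` is a `k`-threshold graph. -/
def IsKThreshold {V : Type*} (G : SimpleGraph V) (k : ℕ) : Prop :=
  ∃ (θ : Fin k → ℝ) (r : V → ℝ), IsRep G θ r

/-- The threshold number `Θ(G)`: the least `k` for which `G` is a `k`-threshold graph. -/
noncomputable def thresholdNumber {V : Type*} (G : SimpleGraph V) : ℕ :=
  sInf {k | IsKThreshold G k}

/-- The 1-based color of an edge with rank sum `s`: it equals `i` exactly when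
`s ∈ [θ_{2i-1}, θ_{2i})` (1-based indexing, with `θ_{k+1} = ∞`), i.e. when the number
of thresholds not exceeding `s` equals `2i - 1`. -/
noncomputable def edgeColor {k : ℕ} (θ : Fin k → ℝ) (s : ℝ) : ℕ :=
  ((Finset.univ.filter (fun i => θ i ≤ s)).card + 1) / 2

/-- The 1-based color of a nonedge with rank sum `s`: it equals `i` exactly when
`s ∈ [θ_{2i-2}, θ_{2i-1})` (1-based indexing, with `θ₀ = -∞`), i.e. when the number
of thresholds not exceeding `s` equals `2i - 2`. -/
noncomputable def nonedgeColor {k : ℕ} (θ : Fin k → ℝ) (s : ℝ) : ℕ :=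
  (Finset.univ.filter (fun i => θ i ≤ s)).card / 2 + 1

/-- The multiset of colors on the three edges of the `t`-th triangle of `nK₃`. -/
noncomputable def triColors3 {n k : ℕ} (θ : Fin k → ℝ) (r : Fin n × Fin 3 → ℝ) (t : Fin n) :
    Multiset ℕ :=
  {edgeColor θ (r (t, 0) + r (t, 1)), edgeColor θ (r (t, 0) + r (t, 2)),
    edgeColor θ (r (t, 1) + r (t, 2))}

/-- The multiset of colors on the three nonedges of the `t`-th part of `K_{n×3}`. -/
noncomputable def partColors3 {n k : ℕ} (θ : Fin k → ℝ) (r : Fin n × Fin 3 → ℝ) (t : Fin n) :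
    Multiset ℕ :=
  {nonedgeColor θ (r (t, 0) + r (t, 1)), nonedgeColor θ (r (t, 0) + r (t, 2)),
    nonedgeColor θ (r (t, 1) + r (t, 2))}

/-- In any `(θ₁, …, θ_{2m-1})`-representation of `nK₄`, at most one copy of `K₄`
contains an edge `uv` with `r_u + r_v ≥ θ_{2m-1}` (i.e. of color `m`). -/
theorem stmt18 (n m : ℕ) (hm : 1 ≤ m) (θ : Fin (2 * m - 1) → ℝ)
    (r : Fin n × Fin 4 → ℝ) (hrep : IsRep (copiesK n 4) θ r)
    (t₁ t₂ : Fin n)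
    (h₁ : ∃ a b : Fin 4, a ≠ b ∧ θ ⟨2 * m - 2, by omega⟩ ≤ r (t₁, a) + r (t₁, b))
    (h₂ : ∃ a b : Fin 4, a ≠ b ∧ θ ⟨2 * m - 2, by omega⟩ ≤ r (t₂, a) + r (t₂, b)) :
    t₁ = t₂ := by
  by_contra hne
  obtain ⟨a, b, hab, hs1⟩ := h₁
  obtain ⟨c, d, hcd, hs2⟩ := h₂
  set L : Fin (2 * m - 1) := ⟨2 * m - 2, by omega⟩ with hL
  -- any cross pair with rank sum ≥ θ L yields a contradiction
  have key : ∀ x y : Fin 4, ¬ θ L ≤ r (t₁, x) + r (t₂, y) := by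
    intro x y hxy
    have hne' : (t₁, x) ≠ (t₂, y) := fun h => hne (congrArg Prod.fst h)
    have hadj := (hrep.2 (t₁, x) (t₂, y) hne').not
    have hnadj : ¬ (copiesK n 4).Adj (t₁, x) (t₂, y) := fun h => hne h.1
    have hfull : (Finset.univ.filter (fun i => θ i ≤ r (t₁, x) + r (t₂, y))) =
        (Finset.univ : Finset (Fin (2 * m - 1))) := by
      apply Finset.eq_univ_iff_forall.mpr
      intro i
      simp only [Finset.mem_filter, Finset.mem_univ, true_and]
      exact le_trans (hrep.1.monotone (by
        show i ≤ L
        exact Fin.mk_le_mk.mpr (by omega) |>.trans_eq rfl)) hxy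
    have : ¬ Odd (Finset.univ.filter (fun i => θ i ≤ r (t₁, x) + r (t₂, y))).card :=
      hadj.mp hnadj
    rw [hfull, Finset.card_univ, Fintype.card_fin] at this
    exact this ⟨m - 1, by omega⟩
  -- but the two given edges force some cross pair above θ L
  have hsum : θ L + θ L ≤ (r (t₁, a) + r (t₂, c)) + (r (t₁, b) + r (t₂, d)) := by
    have := add_le_add hs1 hs2
    linarith
  rcases le_or_gt (θ L) (r (t₁, a) + r (t₂, c)) with h | h
  · exact key a c h
  · exact key b d (by linarith)
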